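/- The backward-induction optimal Q-function dominates the Q-function of every policy: for every policy π, every l < τ, every state s, and every action a, Q_π l s a ≤ Q l s a, where Q_π l s a = Σ_{s'} p s a s' * (r s a s' + γ * V_π (l+1) s'); moreover there exists a policy π* with Q_{π*} l s a = Q l s a for all l < τ, s, a. -/

import Mathlib

/-- The backward-induction optimal Q-function dominates the Q-function of every policy:
for every policy `π`, every `l < τ`, every state `s`, and every action `a`,
`Q_π l s a ≤ Q l s a`, where `Q_π l s a = Σ_{s'} p s a s' * (r s a s' + γ * V π (l+1) s')`;
moreover there exists a policy `π*` with `Q_{π*} l s a = Q l s a` for all `l < τ`, `s`, `a`. -/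
theorem optimal_Q_dominates
    {S A : Type*} [Fintype S] [Nonempty S] [Fintype A] [Nonempty A]
    (p : S → A → S → ℝ)
    (hp_nonneg : ∀ s a s', 0 ≤ p s a s')
    (hp_sum : ∀ s a, ∑ s', p s a s' = 1)
    (r : S → A → S → ℝ)
    (hr : ∀ s a s', 0 ≤ r s a s' ∧ r s a s' ≤ 1)
    (γ : ℝ) (hγ0 : 0 ≤ γ) (hγ1 : γ < 1) (τ : ℕ)
    (V : (S → ℕ → A) → ℕ → S → ℝ)
    (hV_ge : ∀ (π : S → ℕ → A) (l : ℕ) (s : S), τ ≤ l → V π l s = 0)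
    (hV_lt : ∀ (π : S → ℕ → A) (l : ℕ) (s : S), l < τ →
      V π l s = ∑ s', p s (π s l) s' * (r s (π s l) s' + γ * V π (l + 1) s'))
    (Q : ℕ → S → A → ℝ)
    (hQ_ge : ∀ (l : ℕ) (s : S) (a : A), τ ≤ l → Q l s a = 0)
    (hQ_lt : ∀ (l : ℕ) (s : S) (a : A), l < τ →
      Q l s a = ∑ s', p s a s' *
        (r s a s' + γ * Finset.univ.sup' Finset.univ_nonempty (fun a' => Q (l + 1) s' a')))
    (Qpol : (S → ℕ → A) → ℕ → S → A → ℝ)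
    (hQpol : ∀ (π : S → ℕ → A) (l : ℕ) (s : S) (a : A), l < τ →
      Qpol π l s a = ∑ s', p s a s' * (r s a s' + γ * V π (l + 1) s')) :
    (∀ (π : S → ℕ → A) (l : ℕ) (s : S) (a : A), l < τ → Qpol π l s a ≤ Q l s a) ∧
    (∃ πstar : S → ℕ → A, ∀ (l : ℕ) (s : S) (a : A), l < τ →
      Qpol πstar l s a = Q l s a) := by
  set M : ℕ → S → ℝ :=
    fun l s => Finset.univ.sup' Finset.univ_nonempty (fun a => Q l s a) with hM
  -- M vanishes past the horizon
  have hM_ge : ∀ l s, τ ≤ l → M l s = 0 := by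
    intro l s hl
    have : (fun a : A => Q l s a) = fun _ => (0 : ℝ) := by
      funext a; exact hQ_ge l s a hl
    simp [hM, this, Finset.sup'_const]
  have hQleM : ∀ l s a, Q l s a ≤ M l s := fun l s a =>
    Finset.le_sup' _ (Finset.mem_univ a)
  -- any policy's value is at most M
  have key : ∀ d l, τ - l = d → ∀ (π : S → ℕ → A) s, V π l s ≤ M l s := by
    intro d
    induction d with
    | zero =>
      intro l hl π s
      have hτl : τ ≤ l := Nat.le_of_sub_eq_zero hl
      rw [hV_ge π l s hτl, hM_ge l s hτl]
    | succ d ih =>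
      intro l hl π s
      have hlτ : l < τ := by omega
      have hIH : ∀ s', V π (l + 1) s' ≤ M (l + 1) s' :=
        fun s' => ih (l + 1) (by omega) π s'
      rw [hV_lt π l s hlτ]
      calc ∑ s', p s (π s l) s' * (r s (π s l) s' + γ * V π (l + 1) s')
          ≤ ∑ s', p s (π s l) s' * (r s (π s l) s' + γ * M (l + 1) s') := by
            apply Finset.sum_le_sum
            intro s' _
            exact mul_le_mul_of_nonneg_left
              (add_le_add_right (mul_le_mul_of_nonneg_left (hIH s') hγ0) _)
              (hp_nonneg s (π s l) s')
        _ = Q l s (π s l) := (hQ_lt l s (π s l) hlτ).symm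
        _ ≤ M l s := hQleM l s (π s l)
  constructor
  · intro π l s a hl
    rw [hQpol π l s a hl, hQ_lt l s a hl]
    apply Finset.sum_le_sum
    intro s' _
    exact mul_le_mul_of_nonneg_left
      (add_le_add_right
        (mul_le_mul_of_nonneg_left (key (τ - (l+1)) (l+1) rfl π s') hγ0) _)
      (hp_nonneg s a s')
  · -- greedy policy
    classical
    refine ⟨fun s l => Classical.choose
      ((Finset.univ.exists_mem_eq_sup' Finset.univ_nonempty (fun a => Q l s a))), ?_⟩
    set πstar : S → ℕ → A := fun s l => Classical.choose
      ((Finset.univ.exists_mem_eq_sup' Finset.univ_nonempty (fun a => Q l s a))) with hπ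
    have hgreedy : ∀ l s, Q l s (πstar s l) = M l s := by
      intro l s
      exact (Classical.choose_spec
        (Finset.univ.exists_mem_eq_sup' Finset.univ_nonempty (fun a => Q l s a))).2.symm
    have keyeq : ∀ d l, τ - l = d → ∀ s, V πstar l s = M l s := by
      intro d
      induction d with
      | zero =>
        intro l hl s
        have hτl : τ ≤ l := Nat.le_of_sub_eq_zero hl
        rw [hV_ge πstar l s hτl, hM_ge l s hτl]
      | succ d ih =>
        intro l hl s
        have hlτ : l < τ := by omega
        have hIH : ∀ s', V πstar (l + 1) s' = M (l + 1) s' :=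
          fun s' => ih (l + 1) (by omega) s'
        rw [hV_lt πstar l s hlτ]
        have : ∑ s', p s (πstar s l) s' * (r s (πstar s l) s' + γ * V πstar (l + 1) s')
            = Q l s (πstar s l) := by
          rw [hQ_lt l s (πstar s l) hlτ]
          exact Finset.sum_congr rfl (fun s' _ => by rw [hIH s'])
        rw [this, hgreedy]
    intro l s a hl
    rw [hQpol πstar l s a hl, hQ_lt l s a hl]
    exact Finset.sum_congr rfl (fun s' _ => by
      rw [keyeq (τ - (l+1)) (l+1) rfl s'])
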